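/- (Hutchinson) Let X be a complete metric space and S_0,…,S_{N-1} : X → X strict contractions with common factor γ ∈ (0,1). Then the Hutchinson–Barnsley operator F̄(A) = closure(S_0(A) ∪ ⋯ ∪ S_{N-1}(A)) on the space of nonempty closed bounded subsets of X has a unique fixed point K, and K is compact. -/

import Mathlib

open Bornology Metric EMetric Set ENNReal NNReal TopologicalSpace

section Aux

variable {X : Type*} [MetricSpace X]

private lemma infEdist_image_le' {f : X → X} {c : ℝ≥0∞} (hc0 : c ≠ 0) (hct : c ≠ ⊤)
    (hf : ∀ a b, edist (f a) (f b) ≤ c * edist a b) (x : X) (t : Set X) :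
    infEDist (f x) (f '' t) ≤ c * infEDist x t := by
  rw [← ENNReal.div_le_iff' hc0 hct]
  refine le_infEDist.2 fun y hy => ?_
  rw [ENNReal.div_le_iff' hc0 hct]
  exact (infEDist_le_edist_of_mem (mem_image_of_mem f hy)).trans (hf x y)

private lemma hausdorffEdist_union_image_le {N : ℕ} (S : Fin N → X → X) {c : ℝ≥0∞}
    (hc0 : c ≠ 0) (hct : c ≠ ⊤)
    (hS : ∀ j a b, edist (S j a) (S j b) ≤ c * edist a b) (A B : Set X) :
    hausdorffEDist (⋃ j, S j '' A) (⋃ j, S j '' B) ≤ c * hausdorffEDist A B := by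
  have key : ∀ A B : Set X, ∀ x ∈ ⋃ j, S j '' A,
      infEDist x (⋃ j, S j '' B) ≤ c * hausdorffEDist A B := by
    intro A B x hx
    obtain ⟨j, a, ha, rfl⟩ := by simpa using hx
    calc infEDist (S j a) (⋃ j, S j '' B) ≤ infEDist (S j a) (S j '' B) :=
          infEDist_anti (Set.subset_iUnion (fun j => S j '' B) j)
      _ ≤ c * infEDist a B := infEdist_image_le' hc0 hct (hS j) a B
      _ ≤ c * hausdorffEDist A B :=
          mul_le_mul_right (infEDist_le_hausdorffEDist_of_mem ha) c
  refine hausdorffEDist_le_of_infEDist (key A B) fun x hx => ?_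
  rw [hausdorffEDist_comm]
  exact key B A x hx

end Aux

/-- Hutchinson: for strict contractions S₀,…,S_{N-1} on a complete
metric space, the Hutchinson–Barnsley operator A ↦ cl(⋃ⱼ Sⱼ(A)) on nonempty
closed bounded subsets has a unique fixed point K, and K is compact. -/
theorem hutchinson_fixed_point {X : Type*} [MetricSpace X] [CompleteSpace X]
    [Nonempty X] {N : ℕ} (hN : 1 ≤ N) (S : Fin N → X → X)
    (γ : ℝ) (hγ0 : 0 < γ) (hγ1 : γ < 1)
    (hS : ∀ (j : Fin N) (x y : X), dist (S j x) (S j y) ≤ γ * dist x y) :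
    ∃ K : Set X,
      (K.Nonempty ∧ IsClosed K ∧ IsBounded K ∧
        closure (⋃ j : Fin N, S j '' K) = K ∧ IsCompact K) ∧
      ∀ K' : Set X, K'.Nonempty → IsClosed K' → IsBounded K' →
        closure (⋃ j : Fin N, S j '' K') = K' → K' = K := by
  haveI : Nonempty (Fin N) := ⟨⟨0, hN⟩⟩
  haveI : Nonempty (NonemptyCompacts X) :=
    ⟨⟨⟨{Classical.arbitrary X}, isCompact_singleton⟩, Set.singleton_nonempty _⟩⟩
  set c : ℝ≥0 := γ.toNNReal with hc
  have hcγ : (c : ℝ) = γ := Real.coe_toNNReal γ hγ0.le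
  have hc0 : (c : ℝ≥0∞) ≠ 0 := by
    simp [hc, ENNReal.coe_eq_zero, Real.toNNReal_eq_zero, not_le, hγ0]
  have hct : (c : ℝ≥0∞) ≠ ⊤ := ENNReal.coe_ne_top
  have hc1 : c < 1 := by rw [← NNReal.coe_lt_coe, hcγ, NNReal.coe_one]; exact hγ1
  have hlip : ∀ j, LipschitzWith c (S j) := fun j =>
    LipschitzWith.of_dist_le_mul fun x y => by rw [hcγ]; exact hS j x y
  have hSe : ∀ (j : Fin N) (a b : X), edist (S j a) (S j b) ≤ (c : ℝ≥0∞) * edist a b :=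
    fun j a b => (hlip j).edist_le_mul a b
  -- define the operator on nonempty compacts
  let F : NonemptyCompacts X → NonemptyCompacts X := fun A =>
    ⟨⟨⋃ j, S j '' A, isCompact_iUnion fun j => A.isCompact.image (hlip j).continuous⟩,
      let ⟨x, hx⟩ := A.nonempty
      ⟨S ⟨0, hN⟩ x, Set.mem_iUnion.2 ⟨⟨0, hN⟩, Set.mem_image_of_mem _ hx⟩⟩⟩
  have hF : ContractingWith c F := by
    refine ⟨hc1, fun A B => ?_⟩
    exact hausdorffEdist_union_image_le S hc0 hct hSe A.1 B.1
  obtain ⟨K₀, hK₀fix⟩ : ∃ K₀, Function.IsFixedPt F K₀ := ⟨hF.fixedPoint F, hF.fixedPoint_isFixedPt⟩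
  have hfix : (⋃ j, S j '' (K₀ : Set X)) = (K₀ : Set X) := congrArg (·.1.1) hK₀fix
  refine ⟨K₀, ⟨K₀.nonempty, K₀.isCompact.isClosed, K₀.isCompact.isBounded, ?_, K₀.isCompact⟩, ?_⟩
  · rw [hfix, K₀.isCompact.isClosed.closure_eq]
  · intro K' hne hcl hbd hfix'
    have hfin : hausdorffEDist K' (K₀ : Set X) ≠ ⊤ :=
      hausdorffEDist_ne_top_of_nonempty_of_bounded hne K₀.nonempty hbd K₀.isCompact.isBounded
    have hle : hausdorffEDist K' (K₀ : Set X) ≤ (c : ℝ≥0∞) * hausdorffEDist K' (K₀ : Set X) := by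
      conv_lhs => rw [← hfix', ← hfix]
      rw [hausdorffEDist_closure_left]
      exact hausdorffEdist_union_image_le S hc0 hct hSe K' K₀
    have hzero : hausdorffEDist K' (K₀ : Set X) = 0 := by
      by_contra h
      have : (c : ℝ≥0∞) * hausdorffEDist K' (K₀ : Set X) < 1 * hausdorffEDist K' (K₀ : Set X) :=
        ENNReal.mul_lt_mul_left h hfin (by exact_mod_cast hc1)
      rw [one_mul] at this
      exact absurd (hle.trans_lt this) (lt_irrefl _)
    exact IsClosed.hausdorffEDist_zero_iff hcl K₀.isCompact.isClosed |>.1 hzero
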